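/- Let A₁, A₂, A₃ be algebras over a field k such that (A₁, A₂), (A₁, A₃), (A₂, A₃) are Dorroh pairs of algebras, A₃ is both an A₁-A₂-bimodule and an A₂-A₁-bimodule (with actions given by the various module structures), and a₁(a₂a₃) = (a₁a₂)a₃, a₂(a₁a₃) = (a₂a₁)a₃, (a₃a₂)a₁ = a₃(a₂a₁), (a₃a₁)a₂ = a₃(a₁a₂) for all aᵢ ∈ Aᵢ. Then (A₁⋉_d A₂, A₃) and (A₁, A₂⋉_d A₃) are Dorroh pairs of algebras (with the componentwise actions), and the map ((a₁,a₂),a₃) ↦ (a₁,(a₂,a₃)) is an algebra isomorphism (A₁⋉_d A₂)⋉_d A₃ ≅ A₁⋉_d(A₂⋉_d A₃). -/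

import Mathlib

section

variable {k : Type} [Field k]

/-- A map is `k`-bilinear. -/
def Bilin2 {M N P : Type} [AddCommGroup M] [Module k M] [AddCommGroup N] [Module k N]
    [AddCommGroup P] [Module k P] (f : M → N → P) : Prop :=
  (∀ x x' y, f (x + x') y = f x y + f x' y) ∧
  (∀ (c : k) x y, f (c • x) y = c • f x y) ∧
  (∀ x y y', f x (y + y') = f x y + f x y') ∧
  (∀ (c : k) x y, f x (c • y) = c • f x y)

/-- `m` is the multiplication of an associative (not necessarily unital) `k`-algebra. -/
def IsAlgMul {A : Type} [AddCommGroup A] [Module k A] (m : A → A → A) : Prop :=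
  Bilin2 (k := k) m ∧ ∀ x y z, m (m x y) z = m x (m y z)

/-- `(A, I)` with multiplications `mA`, `mI` and actions `l`, `r` is a Dorroh pair of
algebras: `I` is an `A`-bimodule whose actions are compatible with the multiplication
of `I`. -/
def IsDorrohPairA {A I : Type} [AddCommGroup A] [Module k A] [AddCommGroup I] [Module k I]
    (mA : A → A → A) (mI : I → I → I) (l : A → I → I) (r : I → A → I) : Prop :=
  IsAlgMul (k := k) mA ∧ IsAlgMul (k := k) mI ∧
  Bilin2 (k := k) l ∧ Bilin2 (k := k) r ∧
  (∀ a b x, l (mA a b) x = l a (l b x)) ∧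
  (∀ x a b, r x (mA a b) = r (r x a) b) ∧
  (∀ a x b, r (l a x) b = l a (r x b)) ∧
  (∀ a x y, l a (mI x y) = mI (l a x) y) ∧
  (∀ x a y, mI (r x a) y = mI x (l a y)) ∧
  (∀ x y a, r (mI x y) a = mI x (r y a))

/-- The multiplication of the Dorroh extension `A ⋉_d I`. -/
def dorrohMul {A I : Type} [AddCommGroup A] [AddCommGroup I]
    (mA : A → A → A) (mI : I → I → I) (l : A → I → I) (r : I → A → I)
    (p q : A × I) : A × I :=
  (mA p.1 q.1, l p.1 q.2 + r p.2 q.1 + mI p.2 q.2)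

/-- **Proposition 1.8.** If `(A₁,A₂)`, `(A₁,A₃)`, `(A₂,A₃)` are Dorroh pairs of algebras,
`A₃` is both an `A₁`-`A₂`-bimodule and an `A₂`-`A₁`-bimodule, and the four mixed associativity
conditions hold, then `(A₁⋉_d A₂, A₃)` and `(A₁, A₂⋉_d A₃)` are Dorroh pairs of algebras and
`((a₁,a₂),a₃) ↦ (a₁,(a₂,a₃))` is an algebra isomorphism
`(A₁⋉_d A₂)⋉_d A₃ ≅ A₁⋉_d (A₂⋉_d A₃)`. -/
theorem dorroh_algebra_iterated {A₁ A₂ A₃ : Type}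
    [AddCommGroup A₁] [Module k A₁] [AddCommGroup A₂] [Module k A₂]
    [AddCommGroup A₃] [Module k A₃]
    (m₁ : A₁ → A₁ → A₁) (m₂ : A₂ → A₂ → A₂) (m₃ : A₃ → A₃ → A₃)
    (l12 : A₁ → A₂ → A₂) (r21 : A₂ → A₁ → A₂)
    (l13 : A₁ → A₃ → A₃) (r31 : A₃ → A₁ → A₃)
    (l23 : A₂ → A₃ → A₃) (r32 : A₃ → A₂ → A₃)
    (h12 : IsDorrohPairA (k := k) m₁ m₂ l12 r21)
    (h13 : IsDorrohPairA (k := k) m₁ m₃ l13 r31)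
    (h23 : IsDorrohPairA (k := k) m₂ m₃ l23 r32)
    -- `A₃` is an `A₁`-`A₂`-bimodule
    (hb1 : ∀ a₁ c a₂, l13 a₁ (r32 c a₂) = r32 (l13 a₁ c) a₂)
    -- `A₃` is an `A₂`-`A₁`-bimodule
    (hb2 : ∀ a₂ c a₁, l23 a₂ (r31 c a₁) = r31 (l23 a₂ c) a₁)
    -- a₁(a₂a₃) = (a₁a₂)a₃
    (hc1 : ∀ a₁ a₂ a₃, l13 a₁ (l23 a₂ a₃) = l23 (l12 a₁ a₂) a₃)
    -- a₂(a₁a₃) = (a₂a₁)a₃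
    (hc2 : ∀ a₂ a₁ a₃, l23 a₂ (l13 a₁ a₃) = l23 (r21 a₂ a₁) a₃)
    -- (a₃a₂)a₁ = a₃(a₂a₁)
    (hc3 : ∀ a₃ a₂ a₁, r31 (r32 a₃ a₂) a₁ = r32 a₃ (r21 a₂ a₁))
    -- (a₃a₁)a₂ = a₃(a₁a₂)
    (hc4 : ∀ a₃ a₁ a₂, r32 (r31 a₃ a₁) a₂ = r32 a₃ (l12 a₁ a₂)) :
    IsDorrohPairA (k := k) (dorrohMul m₁ m₂ l12 r21) m₃
      (fun p c => l13 p.1 c + l23 p.2 c)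
      (fun c p => r31 c p.1 + r32 c p.2) ∧
    IsDorrohPairA (k := k) m₁ (dorrohMul m₂ m₃ l23 r32)
      (fun a q => (l12 a q.1, l13 a q.2))
      (fun q a => (r21 q.1 a, r31 q.2 a)) ∧
    Function.Bijective (fun p : (A₁ × A₂) × A₃ => (p.1.1, (p.1.2, p.2))) ∧
    ∀ p q : (A₁ × A₂) × A₃,
      (fun p : (A₁ × A₂) × A₃ => (p.1.1, (p.1.2, p.2)))
        (dorrohMul (dorrohMul m₁ m₂ l12 r21) m₃
          (fun p c => l13 p.1 c + l23 p.2 c)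
          (fun c p => r31 c p.1 + r32 c p.2) p q) =
      dorrohMul m₁ (dorrohMul m₂ m₃ l23 r32)
        (fun a q => (l12 a q.1, l13 a q.2))
        (fun q a => (r21 q.1 a, r31 q.2 a))
        ((fun p : (A₁ × A₂) × A₃ => (p.1.1, (p.1.2, p.2))) p)
        ((fun p : (A₁ × A₂) × A₃ => (p.1.1, (p.1.2, p.2))) q) := by
  obtain ⟨⟨⟨m1al, m1sl, m1ar, m1sr⟩, m1as⟩, ⟨⟨m2al, m2sl, m2ar, m2sr⟩, m2as⟩,
    ⟨l12al, l12sl, l12ar, l12sr⟩, ⟨r21al, r21sl, r21ar, r21sr⟩,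
    hL12, hR12, hC12, hp12a, hp12b, hp12c⟩ := h12
  obtain ⟨-, ⟨⟨m3al, m3sl, m3ar, m3sr⟩, m3as⟩,
    ⟨l13al, l13sl, l13ar, l13sr⟩, ⟨r31al, r31sl, r31ar, r31sr⟩,
    hL13, hR13, hC13, hp13a, hp13b, hp13c⟩ := h13
  obtain ⟨-, -, ⟨l23al, l23sl, l23ar, l23sr⟩, ⟨r32al, r32sl, r32ar, r32sr⟩,
    hL23, hR23, hC23, hp23a, hp23b, hp23c⟩ := h23
  refine ⟨⟨⟨⟨fun x x' y => ?_, fun c x y => ?_, fun x y y' => ?_, fun c x y => ?_⟩,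
      fun x y z => ?_⟩,
      ⟨⟨m3al, m3sl, m3ar, m3sr⟩, m3as⟩,
      ⟨fun x x' y => ?_, fun c x y => ?_, fun x y y' => ?_, fun c x y => ?_⟩,
      ⟨fun x x' y => ?_, fun c x y => ?_, fun x y y' => ?_, fun c x y => ?_⟩,
      fun a b x => ?_, fun x a b => ?_, fun a x b => ?_, fun a x y => ?_,
      fun x a y => ?_, fun x y a => ?_⟩,
    ⟨⟨⟨m1al, m1sl, m1ar, m1sr⟩, m1as⟩,
      ⟨⟨fun x x' y => ?_, fun c x y => ?_, fun x y y' => ?_, fun c x y => ?_⟩,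
      fun x y z => ?_⟩,
      ⟨fun x x' y => ?_, fun c x y => ?_, fun x y y' => ?_, fun c x y => ?_⟩,
      ⟨fun x x' y => ?_, fun c x y => ?_, fun x y y' => ?_, fun c x y => ?_⟩,
      fun a b x => ?_, fun x a b => ?_, fun a x b => ?_, fun a x y => ?_,
      fun x a y => ?_, fun x y a => ?_⟩,
    (Equiv.prodAssoc A₁ A₂ A₃).bijective, fun p q => ?_⟩ <;>
  simp only [dorrohMul, Prod.ext_iff, Prod.fst_add, Prod.snd_add, Prod.smul_fst,
    Prod.smul_snd, smul_add,
    m1al, m1sl, m1ar, m1sr, m2al, m2sl, m2ar, m2sr, m3al, m3sl, m3ar, m3sr,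
    l12al, l12sl, l12ar, l12sr, r21al, r21sl, r21ar, r21sr,
    l13al, l13sl, l13ar, l13sr, r31al, r31sl, r31ar, r31sr,
    l23al, l23sl, l23ar, l23sr, r32al, r32sl, r32ar, r32sr,
    m1as, m2as, m3as, hL12, hR12, hC12, hp12a, hp12b, hp12c,
    hL13, hR13, hC13, hp13a, hp13b, hp13c,
    hL23, hR23, hC23, hp23a, hp23b, hp23c,
    hb1, hb2, hc1, hc2, hc3, hc4] <;>
  (try constructorm* _ ∧ _, True) <;> abel

end
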